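/- Let N be a finite set of non-monitors with σ = |N|, and P a family of paths. Define MSC(v) as the minimum cardinality of a set W ⊆ N \ {v} with P_v ⊆ ⋃_{w ∈ W} P_w, where MSC(v) := σ if no such W exists, and define Ω(v) as the largest k ≤ σ such that {v} is k-identifiable (Ω(v) := 0 if {v} is not even 1-identifiable). Theorem: if P_v ≠ ∅ and MSC(v) ≤ σ − 1, then MSC(v) − 1 ≤ Ω(v) ≤ MSC(v). -/
import Mathlib


variable {V : Type*} [DecidableEq V]

/-- A set `S` of non-monitors is `k`-identifiable: any two failure sets of size at most `k`
that differ within `S` are distinguished by the failure state of some path. -/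
def kIdent (N : Finset V) (P : Set (Finset V)) (S : Finset V) (k : ℕ) : Prop :=
  ∀ F₁ F₂ : Finset V, F₁ ⊆ N → F₂ ⊆ N → F₁.card ≤ k → F₂.card ≤ k →
    F₁ ∩ S ≠ F₂ ∩ S → ∃ p ∈ P, Xor' (p ∩ F₁ = ∅) (p ∩ F₂ = ∅)

open scoped Classical

/-- `W ⊆ N \ {v}` covers the paths through `v`. -/
def Covers (N : Finset V) (P : Set (Finset V)) (v : V) (W : Finset V) : Prop :=
  W ⊆ N.erase v ∧ ∀ p ∈ P, v ∈ p → ∃ w ∈ W, w ∈ p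

/-- Minimum set cover number of the paths through `v` by path sets of other non-monitors;
equals `σ = |N|` when no cover exists. -/
noncomputable def MSC (N : Finset V) (P : Set (Finset V)) (v : V) : ℕ :=
  if ∃ W : Finset V, Covers N P v W
  then sInf {n | ∃ W : Finset V, Covers N P v W ∧ W.card = n}
  else N.card

/-- The maximum identifiability of `v`: the largest `k ≤ σ` such that `{v}` is
`k`-identifiable (note `0`-identifiability always holds). -/
noncomputable def Omega (N : Finset V) (P : Set (Finset V)) (v : V) : ℕ :=
  sSup {k | k ≤ N.card ∧ kIdent N P {v} k}

theorem Omega_bounds (N : Finset V) (P : Set (Finset V)) (v : V) (hv : v ∈ N)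
    (hPv : ∃ p ∈ P, v ∈ p) (hMSC : MSC N P v ≤ N.card - 1) :
    MSC N P v - 1 ≤ Omega N P v ∧ Omega N P v ≤ MSC N P v := by
  have hσ : 1 ≤ N.card := Finset.card_pos.mpr ⟨v, hv⟩
  have hcov : ∃ W : Finset V, Covers N P v W := by
    by_contra h
    rw [MSC, if_neg h] at hMSC
    omega
  have hMSCdef : MSC N P v = sInf {n | ∃ W : Finset V, Covers N P v W ∧ W.card = n} := by
    rw [MSC, if_pos hcov]
  obtain ⟨W, hW, hWcard⟩ :
      ∃ W, Covers N P v W ∧ W.card = MSC N P v := by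
    have hne : {n | ∃ W : Finset V, Covers N P v W ∧ W.card = n}.Nonempty := by
      obtain ⟨W, hW⟩ := hcov; exact ⟨W.card, W, hW, rfl⟩
    have := Nat.sInf_mem hne
    rw [← hMSCdef] at this
    exact this
  have hmin : ∀ W' : Finset V, Covers N P v W' → MSC N P v ≤ W'.card := by
    intro W' h
    rw [hMSCdef]
    exact Nat.sInf_le ⟨W', h, rfl⟩
  have hvW : v ∉ W := fun h => Finset.notMem_erase v N (hW.1 h)
  have hm1 : 1 ≤ MSC N P v := by
    by_contra h
    have hW0 : W = ∅ := Finset.card_eq_zero.mp (by omega)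
    obtain ⟨p, hp, hvp⟩ := hPv
    obtain ⟨w, hw, -⟩ := hW.2 p hp hvp
    rw [hW0] at hw
    exact absurd hw (Finset.notMem_empty w)
  have hbdd : BddAbove {k | k ≤ N.card ∧ kIdent N P {v} k} :=
    ⟨N.card, fun k hk => hk.1⟩
  have hId0 : kIdent N P {v} 0 := by
    intro F₁ F₂ _ _ hc1 hc2 hne
    exact absurd (by rw [Finset.card_eq_zero.mp (Nat.le_zero.mp hc1),
      Finset.card_eq_zero.mp (Nat.le_zero.mp hc2)]) hne
  constructor
  · -- lower bound
    have main : ∀ F₁ F₂ : Finset V, F₂ ⊆ N → F₂.card ≤ MSC N P v - 1 →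
        v ∈ F₁ → v ∉ F₂ → ∃ p ∈ P, Xor' (p ∩ F₁ = ∅) (p ∩ F₂ = ∅) := by
      intro F₁ F₂ h2 hc2 hv1 hv2
      have hnc : ¬ Covers N P v F₂ := by
        intro h
        have := hmin F₂ h
        omega
      rw [Covers] at hnc
      push_neg at hnc
      obtain ⟨p, hp, hvp, hpF₂⟩ := hnc (Finset.subset_erase.mpr ⟨h2, hv2⟩)
      refine ⟨p, hp, Or.inr ⟨?_, ?_⟩⟩
      · apply Finset.eq_empty_iff_forall_notMem.mpr
        intro x hx
        exact hpF₂ x (Finset.mem_of_mem_inter_right hx)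
          (Finset.mem_of_mem_inter_left hx)
      · intro h
        exact Finset.eq_empty_iff_forall_notMem.mp h v (Finset.mem_inter.mpr ⟨hvp, hv1⟩)
    have hmem : MSC N P v - 1 ∈ {k | k ≤ N.card ∧ kIdent N P {v} k} := by
      refine ⟨by omega, ?_⟩
      intro F₁ F₂ h1 h2 hc1 hc2 hne
      by_cases hv1 : v ∈ F₁ <;> by_cases hv2 : v ∈ F₂
      · exact absurd (by
          ext x
          simp only [Finset.mem_inter, Finset.mem_singleton]
          constructor
          · rintro ⟨-, rfl⟩; exact ⟨hv2, rfl⟩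
          · rintro ⟨-, rfl⟩; exact ⟨hv1, rfl⟩) hne
      · exact main F₁ F₂ h2 hc2 hv1 hv2
      · obtain ⟨p, hp, hx⟩ := main F₂ F₁ h1 hc1 hv2 hv1
        exact ⟨p, hp, hx.symm⟩
      · exact absurd (by
          ext x
          simp only [Finset.mem_inter, Finset.mem_singleton]
          constructor
          · rintro ⟨hx, rfl⟩; exact absurd hx hv1
          · rintro ⟨hx, rfl⟩; exact absurd hx hv2) hne
    exact le_csSup hbdd hmem
  · -- upper bound
    refine csSup_le ⟨0, Nat.zero_le _, hId0⟩ ?_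
    intro k hk
    by_contra hk'
    push_neg at hk'
    have hF1 : insert v W ⊆ N := Finset.insert_subset hv
      ((hW.1).trans (Finset.erase_subset v N))
    have hF2 : W ⊆ N := (hW.1).trans (Finset.erase_subset v N)
    have hc1 : (insert v W).card ≤ k := by
      rw [Finset.card_insert_of_notMem hvW]
      omega
    have hc2 : W.card ≤ k := by omega
    have hne : insert v W ∩ {v} ≠ W ∩ {v} := by
      intro h
      have hvL : v ∈ insert v W ∩ {v} :=
        Finset.mem_inter.mpr ⟨Finset.mem_insert_self v W, Finset.mem_singleton_self v⟩
      rw [h] at hvL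
      exact hvW (Finset.mem_of_mem_inter_left hvL)
    obtain ⟨p, hp, hx⟩ := hk.2 (insert v W) W hF1 hF2 hc1 hc2 hne
    rcases hx with ⟨h1, h2⟩ | ⟨h2, h1⟩
    · apply h2
      apply Finset.eq_empty_iff_forall_notMem.mpr
      intro x hx
      refine Finset.eq_empty_iff_forall_notMem.mp h1 x (Finset.mem_inter.mpr
        ⟨Finset.mem_of_mem_inter_left hx, Finset.mem_insert_of_mem
          (Finset.mem_of_mem_inter_right hx)⟩)
    · have hvp : v ∈ p := by
        by_contra hvp
        apply h1
        apply Finset.eq_empty_iff_forall_notMem.mpr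
        intro x hx
        have hxp := Finset.mem_of_mem_inter_left hx
        rcases Finset.mem_insert.mp (Finset.mem_of_mem_inter_right hx) with rfl | hxW
        · exact hvp hxp
        · exact Finset.eq_empty_iff_forall_notMem.mp h2 x
            (Finset.mem_inter.mpr ⟨hxp, hxW⟩)
      obtain ⟨w, hw, hwp⟩ := hW.2 p hp hvp
      exact Finset.eq_empty_iff_forall_notMem.mp h2 w (Finset.mem_inter.mpr ⟨hwp, hw⟩)
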